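/- Let r₁,…,rₙ be independent Rademacher random variables and (a_{ij})_{1≤i<j≤n} real numbers. Then P(Σ_{1≤i<j≤n} rᵢrⱼ a_{ij} ≥ 0) ≥ (2√3 − 3)/15 > 3/100, and if not all a_{ij} are zero then P(Σ_{1≤i<j≤n} rᵢrⱼ a_{ij} > 0) ≥ (2√3 − 3)/15. -/

import Mathlib

open MeasureTheory ProbabilityTheory Real

set_option maxHeartbeats 1000000
set_option linter.unusedTactic false
set_option linter.unreachableTactic false
set_option linter.unusedSectionVars false
set_option linter.unusedVariables false

noncomputable section
namespace Stmt15Aux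
open Finset
open scoped Classical
def cc : ℝ := (2 * Real.sqrt 3 - 3) / 15
def al : ℝ := 4 * Real.sqrt 10 * cc / 3
def be : ℝ := 2 * cc
def ga : ℝ := cc / 15

lemma s3_sq : Real.sqrt 3 ^ 2 = 3 := Real.sq_sqrt (by norm_num)
lemma s10_sq : Real.sqrt 10 ^ 2 = 10 := Real.sq_sqrt (by norm_num)
lemma s3_gt : Real.sqrt 3 > 1.7 := by nlinarith [s3_sq, Real.sqrt_nonneg 3]
lemma s3_lt : Real.sqrt 3 < 1.8 := by nlinarith [s3_sq, Real.sqrt_nonneg 3]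
lemma s10_gt : Real.sqrt 10 > 3 := by nlinarith [s10_sq, Real.sqrt_nonneg 10]
lemma cc_pos : 0 < cc := by unfold cc; nlinarith [s3_gt]
lemma cc_le_one : cc ≤ 1 := by unfold cc; nlinarith [s3_lt]
lemma ga_pos : 0 < ga := by unfold ga; nlinarith [cc_pos]
lemma s3_gt2 : Real.sqrt 3 > 1.73 := by nlinarith [s3_sq, Real.sqrt_nonneg 3]
lemma numeric_part : (3 / 100 : ℝ) < (2 * Real.sqrt 3 - 3) / 15 := by nlinarith [s3_gt2]

lemma key_poly (x : ℝ) :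
    al * x + be * x ^ 2 - ga * x ^ 4 ≤ if 0 < x then 1 else 0 := by
  have h3 := s3_sq
  have h10 := s10_sq
  have h3n := Real.sqrt_nonneg 3
  have h10n := Real.sqrt_nonneg 10
  have hg := s3_gt
  have hg10 := s10_gt
  have hgap := ga_pos
  split_ifs with hx
  · have hid : 1 - (al * x + be * x ^ 2 - ga * x ^ 4)
        = ga * ((x ^ 2 - 5 * (2 + Real.sqrt 3)) ^ 2
            + 10 * (Real.sqrt 3 - 1) * (x - Real.sqrt 10 * (1 + Real.sqrt 3) / 2) ^ 2) := by
      unfold ga al be cc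
      linear_combination (-1/30 - Real.sqrt 3/90 + Real.sqrt 3^2/18 + Real.sqrt 3^3/90
          - Real.sqrt 3^4/45) * h10
        + (-2/3 - 2*Real.sqrt 10*x/15 - Real.sqrt 3/9 + 4*Real.sqrt 3*Real.sqrt 10*x/45
          - 2*Real.sqrt 3^2/9) * h3
    have hpos : 0 ≤ ga * ((x ^ 2 - 5 * (2 + Real.sqrt 3)) ^ 2
            + 10 * (Real.sqrt 3 - 1) * (x - Real.sqrt 10 * (1 + Real.sqrt 3) / 2) ^ 2) := by
      apply mul_nonneg hgap.le
      have : (0:ℝ) ≤ 10 * (Real.sqrt 3 - 1) := by nlinarith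
      positivity
    linarith [hid, hpos]
  · push_neg at hx
    have hfac : ga * x ^ 4 - be * x ^ 2 - al * x
        = ga * (x * (x + Real.sqrt 10) ^ 2 * (x - 2 * Real.sqrt 10)) := by
      unfold ga al be cc
      linear_combination (-x^2/25 - 2*Real.sqrt 10*x/75 + 2*Real.sqrt 3*x^2/75
        + 4*Real.sqrt 3*Real.sqrt 10*x/225) * h10
    have h1 : (0:ℝ) ≤ (x * (x - 2 * Real.sqrt 10)) := by nlinarith
    have h2 : (0:ℝ) ≤ x * (x + Real.sqrt 10) ^ 2 * (x - 2 * Real.sqrt 10) := by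
      nlinarith [mul_nonneg h1 (sq_nonneg (x + Real.sqrt 10))]
    nlinarith [mul_nonneg hgap.le h2]open scoped Classical
variable {n : ℕ}

def EE (n : ℕ) : Finset (Fin n × Fin n) := Finset.univ.filter (fun p => p.1 < p.2)
def dd (e : Fin n × Fin n) (v : Fin n) : ℕ :=
  (if e.1 = v then 1 else 0) + (if e.2 = v then 1 else 0)
def W4 (e f g h : Fin n × Fin n) : Prop :=
  ∀ v, Even (dd e v + dd f v + dd g v + dd h v)
def Disj (e f : Fin n × Fin n) : Prop :=
  e.1 ≠ f.1 ∧ e.1 ≠ f.2 ∧ e.2 ≠ f.1 ∧ e.2 ≠ f.2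
def sp (x y : Fin n) : Fin n × Fin n := (min x y, max x y)
def cand (e f : Fin n × Fin n) : Finset ((Fin n × Fin n) × (Fin n × Fin n)) :=
  {(sp e.1 f.1, sp e.2 f.2), (sp e.2 f.2, sp e.1 f.1),
   (sp e.1 f.2, sp e.2 f.1), (sp e.2 f.1, sp e.1 f.2)}
lemma mem_EE {e : Fin n × Fin n} : e ∈ EE n ↔ e.1 < e.2 := by simp [EE]
lemma dd_eq {e : Fin n × Fin n} (he : e.1 ≠ e.2) (v : Fin n) :
    dd e v = if (v = e.1 ∨ v = e.2) then 1 else 0 := by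
  rcases eq_or_ne v e.1 with rfl | h1
  · simp [dd, (Ne.symm he)]
  · rcases eq_or_ne v e.2 with rfl | h2
    · simp [dd, Ne.symm h1, he]
    · simp [dd, Ne.symm h1, Ne.symm h2, h1, h2]
lemma sp_eq {p : Fin n × Fin n} (hp : p.1 < p.2) {x y : Fin n}
    (h1 : p.1 = x ∨ p.1 = y) (h2 : p.2 = x ∨ p.2 = y) : p = sp x y := by
  obtain ⟨u, v⟩ := p
  simp only at hp h1 h2
  rcases h1 with rfl | rfl <;> rcases h2 with rfl | rfl
  · exact absurd hp (lt_irrefl _)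
  · simp [sp, min_eq_left hp.le, max_eq_right hp.le]
  · simp [sp, min_eq_right hp.le, max_eq_left hp.le]
  · exact absurd hp (lt_irrefl _)

lemma structure1 {e f g h : Fin n × Fin n} (he : e ∈ EE n) (hf : f ∈ EE n)
    (hg : g ∈ EE n) (hh : h ∈ EE n) (hd : Disj e f) (hW : W4 e f g h)
    (hge : g ≠ e) (hgf : g ≠ f) :
    (g, h) ∈ cand e f ∧ Disj g h := by
  obtain ⟨i, j⟩ := e; obtain ⟨k, l⟩ := f; obtain ⟨p, q⟩ := g; obtain ⟨s, t⟩ := h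
  rw [mem_EE] at he hf hg hh
  simp only at he hf hg hh
  obtain ⟨hik, hil, hjk, hjl⟩ := hd
  simp only at hik hil hjk hjl
  have hij := ne_of_lt he
  have hkl := ne_of_lt hf
  have hpq' := ne_of_lt hg
  have hst' := ne_of_lt hh
  have hWm : ∀ v : Fin n, ((if v = i ∨ v = j then 1 else 0) + (if v = k ∨ v = l then 1 else 0)
      + (if v = p ∨ v = q then 1 else 0) + (if v = s ∨ v = t then 1 else 0)) % 2 = 0 := by
    intro v
    have hv := hW v
    rw [dd_eq hij, dd_eq hkl, dd_eq hpq', dd_eq hst', Nat.even_iff] at hv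
    exact hv
  have stepA : ∀ v : Fin n, (v = i ∨ v = j ∨ v = k ∨ v = l) →
      (((v = p ∨ v = q) ∧ ¬(v = s ∨ v = t)) ∨ (¬(v = p ∨ v = q) ∧ (v = s ∨ v = t))) := by
    intro v hv
    have hW' := hWm v
    have hef : ((v = i ∨ v = j) ∧ ¬(v = k ∨ v = l)) ∨ (¬(v = i ∨ v = j) ∧ (v = k ∨ v = l)) := by
      rcases hv with rfl | rfl | rfl | rfl
      · exact Or.inl ⟨Or.inl rfl, fun hc => hc.elim hik hil⟩
      · exact Or.inl ⟨Or.inr rfl, fun hc => hc.elim hjk hjl⟩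
      · exact Or.inr ⟨fun hc => hc.elim (fun u => hik u.symm) (fun u => hjk u.symm), Or.inl rfl⟩
      · exact Or.inr ⟨fun hc => hc.elim (fun u => hil u.symm) (fun u => hjl u.symm), Or.inr rfl⟩
    rcases hef with ⟨h1, h2⟩ | ⟨h1, h2⟩
    · by_cases h3 : (v = p ∨ v = q) <;> by_cases h4 : (v = s ∨ v = t)
      · rw [if_pos h1, if_neg h2, if_pos h3, if_pos h4] at hW'; omega
      · exact Or.inl ⟨h3, h4⟩
      · exact Or.inr ⟨h3, h4⟩
      · rw [if_pos h1, if_neg h2, if_neg h3, if_neg h4] at hW'; omega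
    · by_cases h3 : (v = p ∨ v = q) <;> by_cases h4 : (v = s ∨ v = t)
      · rw [if_neg h1, if_pos h2, if_pos h3, if_pos h4] at hW'; omega
      · exact Or.inl ⟨h3, h4⟩
      · exact Or.inr ⟨h3, h4⟩
      · rw [if_neg h1, if_pos h2, if_neg h3, if_neg h4] at hW'; omega
  -- the four base vertices are distinct, giving card 4
  have hTcard : ({i, j, k, l} : Finset (Fin n)).card = 4 := by
    rw [Finset.card_insert_of_notMem (by simp [hij, hik, hil]),
      Finset.card_insert_of_notMem (by simp [hjk, hjl]),
      Finset.card_insert_of_notMem (by simp [hkl]), Finset.card_singleton]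
  have hTsub : ({i, j, k, l} : Finset (Fin n)) ⊆ {p, q, s, t} := by
    intro v hv
    simp only [Finset.mem_insert, Finset.mem_singleton] at hv ⊢
    rcases stepA v hv with ⟨h1, _⟩ | ⟨_, h1⟩ <;> tauto
  have hScard : ({p, q, s, t} : Finset (Fin n)).card ≤ 4 := by
    refine le_trans (Finset.card_insert_le _ _) (Nat.succ_le_succ ?_)
    refine le_trans (Finset.card_insert_le _ _) (Nat.succ_le_succ ?_)
    refine le_trans (Finset.card_insert_le _ _) (Nat.succ_le_succ ?_)
    simp
  have hST : ({p, q, s, t} : Finset (Fin n)) = {i, j, k, l} := by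
    have := Finset.eq_of_subset_of_card_le hTsub (by rw [hTcard]; exact hScard)
    first | exact this | exact this.symm
  have hmemT : ∀ v : Fin n, (v = p ∨ v = q ∨ v = s ∨ v = t) → (v = i ∨ v = j ∨ v = k ∨ v = l) := by
    intro v hv
    have : v ∈ ({p, q, s, t} : Finset (Fin n)) := by
      simp only [Finset.mem_insert, Finset.mem_singleton]; exact hv
    rw [hST] at this
    simpa using this
  have hpT := hmemT p (Or.inl rfl)
  have hqT := hmemT q (Or.inr (Or.inl rfl))
  have hsT := hmemT s (Or.inr (Or.inr (Or.inl rfl)))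
  have htT := hmemT t (Or.inr (Or.inr (Or.inr rfl)))
  have hgh1 : ¬(p = s ∨ p = t) := by
    rcases stepA p hpT with ⟨_, h1⟩ | ⟨h1, _⟩
    · exact h1
    · exact absurd (Or.inl rfl) h1
  have hgh2 : ¬(q = s ∨ q = t) := by
    rcases stepA q hqT with ⟨_, h1⟩ | ⟨h1, _⟩
    · exact h1
    · exact absurd (Or.inr rfl) h1
  have hDisj : Disj (p, q) (s, t) := by
    push_neg at hgh1 hgh2
    exact ⟨hgh1.1, hgh1.2, hgh2.1, hgh2.2⟩
  refine ⟨?_, hDisj⟩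
  simp only [cand, Finset.mem_insert, Finset.mem_singleton]
  rcases hpT with rfl | rfl | rfl | rfl <;> rcases hqT with rfl | rfl | rfl | rfl
  · exact absurd hg (lt_irrefl _)
  · exact absurd rfl hge
  · -- (i, k) : candidate 1
    have hs' : s = j ∨ s = l := by
      rcases hsT with h1 | h1 | h1 | h1
      · exact absurd (Or.inl h1.symm) hgh1
      · exact Or.inl h1
      · exact absurd (Or.inl h1.symm) hgh2
      · exact Or.inr h1
    have ht' : t = j ∨ t = l := by
      rcases htT with h1 | h1 | h1 | h1
      · exact absurd (Or.inr h1.symm) hgh1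
      · exact Or.inl h1
      · exact absurd (Or.inr h1.symm) hgh2
      · exact Or.inr h1
    exact Or.inl (Prod.ext (sp_eq hg (Or.inl rfl) (Or.inr rfl)) (sp_eq hh hs' ht'))
  · -- (i, l) : candidate 3
    have hs' : s = j ∨ s = k := by
      rcases hsT with h1 | h1 | h1 | h1
      · exact absurd (Or.inl h1.symm) hgh1
      · exact Or.inl h1
      · exact Or.inr h1
      · exact absurd (Or.inl h1.symm) hgh2
    have ht' : t = j ∨ t = k := by
      rcases htT with h1 | h1 | h1 | h1
      · exact absurd (Or.inr h1.symm) hgh1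
      · exact Or.inl h1
      · exact Or.inr h1
      · exact absurd (Or.inr h1.symm) hgh2
    exact Or.inr (Or.inr (Or.inl
      (Prod.ext (sp_eq hg (Or.inl rfl) (Or.inr rfl)) (sp_eq hh hs' ht'))))
  · -- (j, i) : wrong order
    exact absurd hg (asymm he)
  · exact absurd hg (lt_irrefl _)
  · -- (j, k) : candidate 4
    have hs' : s = i ∨ s = l := by
      rcases hsT with h1 | h1 | h1 | h1
      · exact Or.inl h1
      · exact absurd (Or.inl h1.symm) hgh1
      · exact absurd (Or.inl h1.symm) hgh2
      · exact Or.inr h1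
    have ht' : t = i ∨ t = l := by
      rcases htT with h1 | h1 | h1 | h1
      · exact Or.inl h1
      · exact absurd (Or.inr h1.symm) hgh1
      · exact absurd (Or.inr h1.symm) hgh2
      · exact Or.inr h1
    exact Or.inr (Or.inr (Or.inr
      (Prod.ext (sp_eq hg (Or.inl rfl) (Or.inr rfl)) (sp_eq hh hs' ht'))))
  · -- (j, l) : candidate 2
    have hs' : s = i ∨ s = k := by
      rcases hsT with h1 | h1 | h1 | h1
      · exact Or.inl h1
      · exact absurd (Or.inl h1.symm) hgh1
      · exact Or.inr h1
      · exact absurd (Or.inl h1.symm) hgh2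
    have ht' : t = i ∨ t = k := by
      rcases htT with h1 | h1 | h1 | h1
      · exact Or.inl h1
      · exact absurd (Or.inr h1.symm) hgh1
      · exact Or.inr h1
      · exact absurd (Or.inr h1.symm) hgh2
    exact Or.inr (Or.inl
      (Prod.ext (sp_eq hg (Or.inl rfl) (Or.inr rfl)) (sp_eq hh hs' ht')))
  · -- (k, i) : candidate 1
    have hs' : s = j ∨ s = l := by
      rcases hsT with h1 | h1 | h1 | h1
      · exact absurd (Or.inl h1.symm) hgh2
      · exact Or.inl h1
      · exact absurd (Or.inl h1.symm) hgh1
      · exact Or.inr h1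
    have ht' : t = j ∨ t = l := by
      rcases htT with h1 | h1 | h1 | h1
      · exact absurd (Or.inr h1.symm) hgh2
      · exact Or.inl h1
      · exact absurd (Or.inr h1.symm) hgh1
      · exact Or.inr h1
    exact Or.inl (Prod.ext (sp_eq hg (Or.inr rfl) (Or.inl rfl)) (sp_eq hh hs' ht'))
  · -- (k, j) : candidate 4
    have hs' : s = i ∨ s = l := by
      rcases hsT with h1 | h1 | h1 | h1
      · exact Or.inl h1
      · exact absurd (Or.inl h1.symm) hgh2
      · exact absurd (Or.inl h1.symm) hgh1
      · exact Or.inr h1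
    have ht' : t = i ∨ t = l := by
      rcases htT with h1 | h1 | h1 | h1
      · exact Or.inl h1
      · exact absurd (Or.inr h1.symm) hgh2
      · exact absurd (Or.inr h1.symm) hgh1
      · exact Or.inr h1
    exact Or.inr (Or.inr (Or.inr
      (Prod.ext (sp_eq hg (Or.inr rfl) (Or.inl rfl)) (sp_eq hh hs' ht'))))
  · exact absurd hg (lt_irrefl _)
  · exact absurd rfl hgf
  · -- (l, i) : candidate 3
    have hs' : s = j ∨ s = k := by
      rcases hsT with h1 | h1 | h1 | h1
      · exact absurd (Or.inl h1.symm) hgh2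
      · exact Or.inl h1
      · exact Or.inr h1
      · exact absurd (Or.inl h1.symm) hgh1
    have ht' : t = j ∨ t = k := by
      rcases htT with h1 | h1 | h1 | h1
      · exact absurd (Or.inr h1.symm) hgh2
      · exact Or.inl h1
      · exact Or.inr h1
      · exact absurd (Or.inr h1.symm) hgh1
    exact Or.inr (Or.inr (Or.inl
      (Prod.ext (sp_eq hg (Or.inr rfl) (Or.inl rfl)) (sp_eq hh hs' ht'))))
  · -- (l, j) : candidate 2
    have hs' : s = i ∨ s = k := by
      rcases hsT with h1 | h1 | h1 | h1
      · exact Or.inl h1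
      · exact absurd (Or.inl h1.symm) hgh2
      · exact Or.inr h1
      · exact absurd (Or.inl h1.symm) hgh1
    have ht' : t = i ∨ t = k := by
      rcases htT with h1 | h1 | h1 | h1
      · exact Or.inl h1
      · exact absurd (Or.inr h1.symm) hgh2
      · exact Or.inr h1
      · exact absurd (Or.inr h1.symm) hgh1
    exact Or.inr (Or.inl
      (Prod.ext (sp_eq hg (Or.inr rfl) (Or.inl rfl)) (sp_eq hh hs' ht')))
  · -- (l, k) : wrong order
    exact absurd hg (asymm hf)
  · exact absurd hg (lt_irrefl _)
-- continuing: counting lemmas, NL, perms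
lemma cand_card (e f : Fin n × Fin n) : (cand e f).card ≤ 4 := by
  unfold cand
  refine le_trans (Finset.card_insert_le _ _) (Nat.succ_le_succ ?_)
  refine le_trans (Finset.card_insert_le _ _) (Nat.succ_le_succ ?_)
  refine le_trans (Finset.card_insert_le _ _) (Nat.succ_le_succ ?_)
  simp

lemma w4_cancel {e g h : Fin n × Fin n} (hW : W4 e e g h) :
    ∀ v, Even (dd g v + dd h v) := by
  intro v
  obtain ⟨k, hk⟩ := hW v
  exact ⟨k - dd e v, by omega⟩

lemma pair_elim {f h : Fin n × Fin n} (hf : f ∈ EE n) (hh : h ∈ EE n)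
    (hev : ∀ v, Even (dd f v + dd h v)) : f = h := by
  rw [mem_EE] at hf hh
  have hfne : f.1 ≠ f.2 := ne_of_lt hf
  have hhne : h.1 ≠ h.2 := ne_of_lt hh
  have h1 : f.1 = h.1 ∨ f.1 = h.2 := by
    have := hev f.1
    rw [dd_eq hfne, dd_eq hhne] at this
    by_cases hm : f.1 = h.1 ∨ f.1 = h.2
    · exact hm
    · exfalso; simp [hm] at this <;> omega
  have h2 : f.2 = h.1 ∨ f.2 = h.2 := by
    have := hev f.2
    rw [dd_eq hfne, dd_eq hhne] at this
    by_cases hm : f.2 = h.1 ∨ f.2 = h.2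
    · exact hm
    · exfalso; simp [hm, Ne.symm hfne] at this <;> omega
  rcases h1 with h1 | h1 <;> rcases h2 with h2 | h2
  · exact absurd (h1 ▸ h2 ▸ hf) (lt_irrefl _)
  · exact Prod.ext h1 h2
  · exfalso; rw [h1, h2] at hf; exact absurd (hh.trans hf) (lt_irrefl _)
  · exact absurd (h1 ▸ h2 ▸ hf) (lt_irrefl _)

lemma w4_refl_pair {f h : Fin n × Fin n} : (∀ v, Even (dd f v + dd h v)) → W4 f f h h := by
  intro _ v
  exact ⟨dd f v + dd h v, by ring⟩

lemma w2_refl (f : Fin n × Fin n) : ∀ v, Even (dd f v + dd f v) :=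
  fun v => ⟨dd f v, by ring⟩

lemma odd_single {e : Fin n × Fin n} (he : e ∈ EE n) :
    ¬ (∀ v, Even (dd e v)) := by
  rw [mem_EE] at he
  intro hcon
  have := hcon e.1
  rw [dd_eq (ne_of_lt he)] at this
  simp at this

lemma dd_self_sum {e : Fin n × Fin n} (he : e.1 ≠ e.2) :
    dd e e.1 + dd e e.2 = 2 := by
  simp [dd, he, Ne.symm he]

lemma shared_one {e f : Fin n × Fin n} (he : e ∈ EE n) (hf : f ∈ EE n)
    (hne : f ≠ e) (hnd : ¬ Disj e f) : dd f e.1 + dd f e.2 = 1 := by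
  rw [mem_EE] at he hf
  have hene : e.1 ≠ e.2 := ne_of_lt he
  have hfne : f.1 ≠ f.2 := ne_of_lt hf
  unfold Disj at hnd
  push_neg at hnd
  have hnef : ¬ (f.1 = e.1 ∧ f.2 = e.2) := fun ⟨u, v⟩ => hne (Prod.ext u v)
  unfold dd
  by_cases h11 : f.1 = e.1 <;> by_cases h12 : f.1 = e.2 <;>
    by_cases h21 : f.2 = e.1 <;> by_cases h22 : f.2 = e.2 <;>
    simp_all <;> omega

-- permutation lemmas for W4
lemma w4_1324 {e f g h : Fin n × Fin n} (hW : W4 e f g h) : W4 e g f h :=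
  fun v => by obtain ⟨c, hc⟩ := hW v; exact ⟨c, by omega⟩
lemma w4_3412 {e f g h : Fin n × Fin n} (hW : W4 e f g h) : W4 g h e f :=
  fun v => by obtain ⟨c, hc⟩ := hW v; exact ⟨c, by omega⟩
lemma w4_1423 {e f g h : Fin n × Fin n} (hW : W4 e f g h) : W4 e h f g :=
  fun v => by obtain ⟨c, hc⟩ := hW v; exact ⟨c, by omega⟩
lemma w4_2413 {e f g h : Fin n × Fin n} (hW : W4 e f g h) : W4 f h e g :=
  fun v => by obtain ⟨c, hc⟩ := hW v; exact ⟨c, by omega⟩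
lemma w4_2314 {e f g h : Fin n × Fin n} (hW : W4 e f g h) : W4 f g e h :=
  fun v => by obtain ⟨c, hc⟩ := hW v; exact ⟨c, by omega⟩

lemma count_sub {x y : Fin n × Fin n} (hx : x ∈ EE n) (hy : y ∈ EE n)
    (P : (Fin n × Fin n) × (Fin n × Fin n) → Prop)
    (hP : ∀ z t, z ∈ EE n → t ∈ EE n → P (z, t) → W4 x y z t ∧ z ≠ x ∧ z ≠ y ∧ Disj x y) :
    ((EE n ×ˢ EE n).filter P).card ≤ 4 := by
  refine le_trans (Finset.card_le_card ?_) (cand_card x y)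
  intro p hp
  rw [Finset.mem_filter, Finset.mem_product] at hp
  obtain ⟨⟨hz, ht⟩, hPp⟩ := hp
  obtain ⟨hW, h1, h2, h3⟩ := hP p.1 p.2 hz ht (by simpa using hPp)
  have := (structure1 hx hy hz ht h3 hW h1 h2).1
  simpa using this

lemma count_sub2 {x y : Fin n × Fin n} (hx : x ∈ EE n) (hy : y ∈ EE n)
    (P : (Fin n × Fin n) × (Fin n × Fin n) → Prop)
    (hP : ∀ z t, z ∈ EE n → t ∈ EE n → P (z, t) →
      W4 z t x y ∧ Disj z t ∧ x ≠ z ∧ x ≠ t ∧ y ≠ z ∧ y ≠ t) :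
    ((EE n ×ˢ EE n).filter P).card ≤ 4 := by
  refine le_trans (Finset.card_le_card ?_) (cand_card x y)
  intro p hp
  rw [Finset.mem_filter, Finset.mem_product] at hp
  obtain ⟨⟨hz, ht⟩, hPp⟩ := hp
  obtain ⟨hW, hdzt, h1, h2, h3, h4⟩ := hP p.1 p.2 hz ht (by simpa using hPp)
  have hdxy : Disj x y := (structure1 hz ht hx hy hdzt hW h1 h2).2
  have := (structure1 hx hy hz ht hdxy (w4_3412 hW) (fun u => h1 u.symm) (fun u => h3 u.symm)).1
  simpa using this

lemma count_sub1 {u v : Fin n × Fin n}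
    (P : (Fin n × Fin n) × (Fin n × Fin n) → Prop)
    (hP : ∀ z t, z ∈ EE n → t ∈ EE n → P (z, t) → (z, t) = (u, v)) :
    ((EE n ×ˢ EE n).filter P).card ≤ 1 := by
  refine le_trans (Finset.card_le_card (t := {(u, v)}) ?_) (by simp)
  intro p hp
  rw [Finset.mem_filter, Finset.mem_product] at hp
  obtain ⟨⟨hz, ht⟩, hPp⟩ := hp
  simp only [Finset.mem_singleton]
  have := hP p.1 p.2 hz ht (by simpa using hPp)
  simpa using this

def C1 (e f g h : Fin n × Fin n) : Prop := W4 e f g h ∧ e = f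
def C2 (e f g h : Fin n × Fin n) : Prop := W4 e f g h ∧ e ≠ f ∧ e = g
def C3 (e f g h : Fin n × Fin n) : Prop := W4 e f g h ∧ e ≠ f ∧ e ≠ g ∧ e = h
def C4 (e f g h : Fin n × Fin n) : Prop := W4 e f g h ∧ e ≠ f ∧ e ≠ g ∧ e ≠ h ∧ Disj e f
def C5 (e f g h : Fin n × Fin n) : Prop :=
  W4 e f g h ∧ e ≠ f ∧ e ≠ g ∧ e ≠ h ∧ ¬Disj e f ∧ Disj e g
def C6 (e f g h : Fin n × Fin n) : Prop :=
  W4 e f g h ∧ e ≠ f ∧ e ≠ g ∧ e ≠ h ∧ ¬Disj e f ∧ ¬Disj e g ∧ Disj e h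

lemma cover_last {e f g h : Fin n × Fin n} (he : e ∈ EE n) (hf : f ∈ EE n)
    (hg : g ∈ EE n) (hh : h ∈ EE n) (hW : W4 e f g h) (h1 : e ≠ f) (h2 : e ≠ g)
    (h3 : e ≠ h) (h4 : ¬Disj e f) (h5 : ¬Disj e g) (h6 : ¬Disj e h) : False := by
  have s1 := shared_one he hf (Ne.symm h1) h4
  have s2 := shared_one he hg (Ne.symm h2) h5
  have s3 := shared_one he hh (Ne.symm h3) h6
  have d1 : dd e e.1 + dd e e.2 = 2 := dd_self_sum (ne_of_lt (mem_EE.1 he))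
  have w1 := hW e.1
  have w2 := hW e.2
  rw [Nat.even_iff] at w1 w2
  omega

lemma cover {e f g h : Fin n × Fin n} (he : e ∈ EE n) (hf : f ∈ EE n)
    (hg : g ∈ EE n) (hh : h ∈ EE n) (X : ℝ) :
    (if W4 e f g h then X else 0) =
      (if C1 e f g h then X else 0) + (if C2 e f g h then X else 0)
      + (if C3 e f g h then X else 0) + (if C4 e f g h then X else 0)
      + (if C5 e f g h then X else 0) + (if C6 e f g h then X else 0) := by
  by_cases hW : W4 e f g h
  · by_cases h1 : e = f
    · rw [if_pos hW, if_pos (show C1 e f g h from ⟨hW, h1⟩),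
        if_neg (fun hc : C2 e f g h => hc.2.1 h1),
        if_neg (fun hc : C3 e f g h => hc.2.1 h1),
        if_neg (fun hc : C4 e f g h => hc.2.1 h1),
        if_neg (fun hc : C5 e f g h => hc.2.1 h1),
        if_neg (fun hc : C6 e f g h => hc.2.1 h1)]
      ring
    · by_cases h2 : e = g
      · rw [if_pos hW, if_neg (fun hc : C1 e f g h => h1 hc.2),
          if_pos (show C2 e f g h from ⟨hW, h1, h2⟩),
          if_neg (fun hc : C3 e f g h => hc.2.2.1 h2),
          if_neg (fun hc : C4 e f g h => hc.2.2.1 h2),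
          if_neg (fun hc : C5 e f g h => hc.2.2.1 h2),
          if_neg (fun hc : C6 e f g h => hc.2.2.1 h2)]
        ring
      · by_cases h3 : e = h
        · rw [if_pos hW, if_neg (fun hc : C1 e f g h => h1 hc.2),
            if_neg (fun hc : C2 e f g h => h2 hc.2.2),
            if_pos (show C3 e f g h from ⟨hW, h1, h2, h3⟩),
            if_neg (fun hc : C4 e f g h => hc.2.2.2.1 h3),
            if_neg (fun hc : C5 e f g h => hc.2.2.2.1 h3),
            if_neg (fun hc : C6 e f g h => hc.2.2.2.1 h3)]
          ring
        · by_cases h4 : Disj e f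
          · rw [if_pos hW, if_neg (fun hc : C1 e f g h => h1 hc.2),
              if_neg (fun hc : C2 e f g h => h2 hc.2.2),
              if_neg (fun hc : C3 e f g h => h3 hc.2.2.2),
              if_pos (show C4 e f g h from ⟨hW, h1, h2, h3, h4⟩),
              if_neg (fun hc : C5 e f g h => hc.2.2.2.2.1 h4),
              if_neg (fun hc : C6 e f g h => hc.2.2.2.2.1 h4)]
            ring
          · by_cases h5 : Disj e g
            · rw [if_pos hW, if_neg (fun hc : C1 e f g h => h1 hc.2),
                if_neg (fun hc : C2 e f g h => h2 hc.2.2),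
                if_neg (fun hc : C3 e f g h => h3 hc.2.2.2),
                if_neg (fun hc : C4 e f g h => h4 hc.2.2.2.2),
                if_pos (show C5 e f g h from ⟨hW, h1, h2, h3, h4, h5⟩),
                if_neg (fun hc : C6 e f g h => hc.2.2.2.2.2.1 h5)]
              ring
            · by_cases h6 : Disj e h
              · rw [if_pos hW, if_neg (fun hc : C1 e f g h => h1 hc.2),
                  if_neg (fun hc : C2 e f g h => h2 hc.2.2),
                  if_neg (fun hc : C3 e f g h => h3 hc.2.2.2),
                  if_neg (fun hc : C4 e f g h => h4 hc.2.2.2.2),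
                  if_neg (fun hc : C5 e f g h => h5 hc.2.2.2.2.2),
                  if_pos (show C6 e f g h from ⟨hW, h1, h2, h3, h4, h5, h6⟩)]
                ring
              · exact absurd (cover_last he hf hg hh hW h1 h2 h3 h4 h5 h6) not_false
  · rw [if_neg hW, if_neg (fun hc : C1 e f g h => hW hc.1),
      if_neg (fun hc : C2 e f g h => hW hc.1), if_neg (fun hc : C3 e f g h => hW hc.1),
      if_neg (fun hc : C4 e f g h => hW hc.1), if_neg (fun hc : C5 e f g h => hW hc.1),
      if_neg (fun hc : C6 e f g h => hW hc.1)]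
    ring

lemma dist_upgrade {x y z t : Fin n × Fin n} (hx : x ∈ EE n) (hy : y ∈ EE n)
    (hz : z ∈ EE n) (ht : t ∈ EE n) (hW : W4 x y z t) (h1 : x ≠ y) (h2 : x ≠ z)
    (h3 : x ≠ t) : y ≠ z ∧ y ≠ t ∧ z ≠ t := by
  refine ⟨?_, ?_, ?_⟩
  · rintro rfl
    exact h3 (pair_elim hx ht (w4_cancel (w4_2314 hW)))
  · rintro rfl
    exact h2 (pair_elim hx hz (w4_cancel (w4_2413 hW)))
  · rintro rfl
    exact h1 (pair_elim hx hy (w4_cancel (w4_3412 hW)))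

lemma NL (k : ℕ) (C : (Fin n × Fin n) → (Fin n × Fin n) → (Fin n × Fin n) → (Fin n × Fin n) → Prop)
    (w : Fin n × Fin n → ℝ) (hw : ∀ x, 0 ≤ w x)
    (hcnt : ∀ x ∈ EE n, ∀ y ∈ EE n, ((EE n ×ˢ EE n).filter (fun p => C x y p.1 p.2)).card ≤ k) :
    (∑ x ∈ EE n, ∑ y ∈ EE n, ∑ z ∈ EE n, ∑ t ∈ EE n, if C x y z t then w x * w y else 0)
      ≤ (k : ℝ) * ((∑ x ∈ EE n, w x) * (∑ y ∈ EE n, w y)) := by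
  have inner : ∀ x ∈ EE n, ∀ y ∈ EE n,
      (∑ z ∈ EE n, ∑ t ∈ EE n, if C x y z t then w x * w y else 0) ≤ (k : ℝ) * (w x * w y) := by
    intro x hx y hy
    rw [← Finset.sum_product']
    rw [← Finset.sum_filter]
    rw [Finset.sum_const, nsmul_eq_mul]
    exact mul_le_mul_of_nonneg_right (by exact_mod_cast hcnt x hx y hy)
      (mul_nonneg (hw x) (hw y))
  calc (∑ x ∈ EE n, ∑ y ∈ EE n, ∑ z ∈ EE n, ∑ t ∈ EE n, if C x y z t then w x * w y else 0)
      ≤ ∑ x ∈ EE n, ∑ y ∈ EE n, (k : ℝ) * (w x * w y) :=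
        Finset.sum_le_sum (fun x hx => Finset.sum_le_sum (fun y hy => inner x hx y hy))
    _ = (k : ℝ) * ((∑ x ∈ EE n, w x) * (∑ y ∈ EE n, w y)) := by
        rw [Finset.sum_mul_sum]
        simp [Finset.mul_sum]

theorem comb_main (A : Fin n × Fin n → ℝ) :
    (∑ e ∈ EE n, ∑ f ∈ EE n, ∑ g ∈ EE n, ∑ h ∈ EE n,
      if W4 e f g h then A e * A f * (A g * A h) else 0)
      ≤ 15 * ((∑ e ∈ EE n, A e ^ 2) * (∑ e ∈ EE n, A e ^ 2)) := by
  have hw : ∀ x : Fin n × Fin n, 0 ≤ A x ^ 2 := fun x => sq_nonneg _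
  set w : Fin n × Fin n → ℝ := fun e => A e ^ 2 with hwdef
  set σ : ℝ := ∑ e ∈ EE n, w e with hσ
  -- generic helpers
  have sum4_le : ∀ (F G : (Fin n × Fin n) → (Fin n × Fin n) → (Fin n × Fin n) → (Fin n × Fin n) → ℝ),
      (∀ e ∈ EE n, ∀ f ∈ EE n, ∀ g ∈ EE n, ∀ h ∈ EE n, F e f g h ≤ G e f g h) →
      (∑ e ∈ EE n, ∑ f ∈ EE n, ∑ g ∈ EE n, ∑ h ∈ EE n, F e f g h)
        ≤ (∑ e ∈ EE n, ∑ f ∈ EE n, ∑ g ∈ EE n, ∑ h ∈ EE n, G e f g h) := by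
    intro F G hFG
    refine Finset.sum_le_sum fun e he => Finset.sum_le_sum fun f hf =>
      Finset.sum_le_sum fun g hg => Finset.sum_le_sum fun h hh => hFG e he f hf g hg h hh
  have perm1324 : ∀ (F : (Fin n × Fin n) → (Fin n × Fin n) → (Fin n × Fin n) → (Fin n × Fin n) → ℝ),
      (∑ e ∈ EE n, ∑ f ∈ EE n, ∑ g ∈ EE n, ∑ h ∈ EE n, F e f g h)
        = (∑ x ∈ EE n, ∑ y ∈ EE n, ∑ z ∈ EE n, ∑ t ∈ EE n, F x z y t) :=
    fun F => Finset.sum_congr rfl fun e _ => Finset.sum_comm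
  have perm3412 : ∀ (F : (Fin n × Fin n) → (Fin n × Fin n) → (Fin n × Fin n) → (Fin n × Fin n) → ℝ),
      (∑ e ∈ EE n, ∑ f ∈ EE n, ∑ g ∈ EE n, ∑ h ∈ EE n, F e f g h)
        = (∑ x ∈ EE n, ∑ y ∈ EE n, ∑ z ∈ EE n, ∑ t ∈ EE n, F z t x y) := by
    intro F
    calc (∑ e ∈ EE n, ∑ f ∈ EE n, ∑ g ∈ EE n, ∑ h ∈ EE n, F e f g h)
        = ∑ e ∈ EE n, ∑ g ∈ EE n, ∑ f ∈ EE n, ∑ h ∈ EE n, F e f g h :=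
          Finset.sum_congr rfl fun e _ => Finset.sum_comm
      _ = ∑ g ∈ EE n, ∑ e ∈ EE n, ∑ f ∈ EE n, ∑ h ∈ EE n, F e f g h := Finset.sum_comm
      _ = ∑ g ∈ EE n, ∑ e ∈ EE n, ∑ h ∈ EE n, ∑ f ∈ EE n, F e f g h :=
          Finset.sum_congr rfl fun g _ => Finset.sum_congr rfl fun e _ => Finset.sum_comm
      _ = ∑ g ∈ EE n, ∑ h ∈ EE n, ∑ e ∈ EE n, ∑ f ∈ EE n, F e f g h :=
          Finset.sum_congr rfl fun g _ => Finset.sum_comm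
  have perm2413 : ∀ (F : (Fin n × Fin n) → (Fin n × Fin n) → (Fin n × Fin n) → (Fin n × Fin n) → ℝ),
      (∑ e ∈ EE n, ∑ f ∈ EE n, ∑ g ∈ EE n, ∑ h ∈ EE n, F e f g h)
        = (∑ x ∈ EE n, ∑ y ∈ EE n, ∑ z ∈ EE n, ∑ t ∈ EE n, F z x t y) := by
    intro F
    calc (∑ e ∈ EE n, ∑ f ∈ EE n, ∑ g ∈ EE n, ∑ h ∈ EE n, F e f g h)
        = ∑ f ∈ EE n, ∑ e ∈ EE n, ∑ g ∈ EE n, ∑ h ∈ EE n, F e f g h := Finset.sum_comm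
      _ = ∑ f ∈ EE n, ∑ e ∈ EE n, ∑ h ∈ EE n, ∑ g ∈ EE n, F e f g h :=
          Finset.sum_congr rfl fun f _ => Finset.sum_congr rfl fun e _ => Finset.sum_comm
      _ = ∑ f ∈ EE n, ∑ h ∈ EE n, ∑ e ∈ EE n, ∑ g ∈ EE n, F e f g h :=
          Finset.sum_congr rfl fun f _ => Finset.sum_comm
  have perm1423 : ∀ (F : (Fin n × Fin n) → (Fin n × Fin n) → (Fin n × Fin n) → (Fin n × Fin n) → ℝ),
      (∑ e ∈ EE n, ∑ f ∈ EE n, ∑ g ∈ EE n, ∑ h ∈ EE n, F e f g h)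
        = (∑ x ∈ EE n, ∑ y ∈ EE n, ∑ z ∈ EE n, ∑ t ∈ EE n, F x z t y) := by
    intro F
    calc (∑ e ∈ EE n, ∑ f ∈ EE n, ∑ g ∈ EE n, ∑ h ∈ EE n, F e f g h)
        = ∑ e ∈ EE n, ∑ f ∈ EE n, ∑ h ∈ EE n, ∑ g ∈ EE n, F e f g h :=
          Finset.sum_congr rfl fun e _ => Finset.sum_congr rfl fun f _ => Finset.sum_comm
      _ = ∑ e ∈ EE n, ∑ h ∈ EE n, ∑ f ∈ EE n, ∑ g ∈ EE n, F e f g h :=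
          Finset.sum_congr rfl fun e _ => Finset.sum_comm
  have perm2314 : ∀ (F : (Fin n × Fin n) → (Fin n × Fin n) → (Fin n × Fin n) → (Fin n × Fin n) → ℝ),
      (∑ e ∈ EE n, ∑ f ∈ EE n, ∑ g ∈ EE n, ∑ h ∈ EE n, F e f g h)
        = (∑ x ∈ EE n, ∑ y ∈ EE n, ∑ z ∈ EE n, ∑ t ∈ EE n, F z x y t) := by
    intro F
    calc (∑ e ∈ EE n, ∑ f ∈ EE n, ∑ g ∈ EE n, ∑ h ∈ EE n, F e f g h)
        = ∑ f ∈ EE n, ∑ e ∈ EE n, ∑ g ∈ EE n, ∑ h ∈ EE n, F e f g h := Finset.sum_comm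
      _ = ∑ f ∈ EE n, ∑ g ∈ EE n, ∑ e ∈ EE n, ∑ h ∈ EE n, F e f g h :=
          Finset.sum_congr rfl fun f _ => Finset.sum_comm
  -- BOUND 1
  have hB1 : (∑ e ∈ EE n, ∑ f ∈ EE n, ∑ g ∈ EE n, ∑ h ∈ EE n,
      if C1 e f g h then A e * A f * (A g * A h) else 0) ≤ 1 * (σ * σ) := by
    have step1 : (∑ e ∈ EE n, ∑ f ∈ EE n, ∑ g ∈ EE n, ∑ h ∈ EE n,
        if C1 e f g h then A e * A f * (A g * A h) else 0)
        ≤ (∑ e ∈ EE n, ∑ f ∈ EE n, ∑ g ∈ EE n, ∑ h ∈ EE n,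
          if C1 e f g h then w e * w g else 0) := by
      refine sum4_le _ _ ?_
      intro e he f hf g hg h hh
      split_ifs with hc
      · obtain ⟨hW', rfl⟩ := hc
        have hgh : g = h := pair_elim hg hh (w4_cancel hW')
        rw [← hgh, hwdef]
        exact le_of_eq (by ring)
      · exact le_refl 0
    refine le_trans step1 ?_
    rw [perm1324 (fun e f g h => if C1 e f g h then w e * w g else 0)]
    have := NL (n := n) 1 (fun x y z t => C1 x z y t) w hw ?_
    · simpa using this
    · intro x hx y hy
      refine count_sub1 (u := x) (v := y) _ ?_
      intro z t hz ht hc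
      obtain ⟨hW', hxz⟩ := hc
      subst hxz
      have hyt : y = t := pair_elim hy ht (w4_cancel hW')
      exact Prod.ext rfl hyt.symm
  -- BOUND 2
  have hB2 : (∑ e ∈ EE n, ∑ f ∈ EE n, ∑ g ∈ EE n, ∑ h ∈ EE n,
      if C2 e f g h then A e * A f * (A g * A h) else 0) ≤ 1 * (σ * σ) := by
    have step1 : (∑ e ∈ EE n, ∑ f ∈ EE n, ∑ g ∈ EE n, ∑ h ∈ EE n,
        if C2 e f g h then A e * A f * (A g * A h) else 0)
        ≤ (∑ e ∈ EE n, ∑ f ∈ EE n, ∑ g ∈ EE n, ∑ h ∈ EE n,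
          if C2 e f g h then w e * w f else 0) := by
      refine sum4_le _ _ ?_
      intro e he f hf g hg h hh
      split_ifs with hc
      · obtain ⟨hW', h1, rfl⟩ := hc
        have hfh : f = h := pair_elim hf hh (w4_cancel (w4_1324 hW'))
        rw [← hfh, hwdef]
        exact le_of_eq (by ring)
      · exact le_refl 0
    refine le_trans step1 ?_
    have := NL (n := n) 1 (fun x y z t => C2 x y z t) w hw ?_
    · simpa using this
    · intro x hx y hy
      refine count_sub1 (u := x) (v := y) _ ?_
      intro z t hz ht hc
      obtain ⟨hW', h1, hxz⟩ := hc
      subst hxz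
      have hyt : y = t := pair_elim hy ht (w4_cancel (w4_1324 hW'))
      exact Prod.ext rfl hyt.symm
  -- BOUND 3
  have hB3 : (∑ e ∈ EE n, ∑ f ∈ EE n, ∑ g ∈ EE n, ∑ h ∈ EE n,
      if C3 e f g h then A e * A f * (A g * A h) else 0) ≤ 1 * (σ * σ) := by
    have step1 : (∑ e ∈ EE n, ∑ f ∈ EE n, ∑ g ∈ EE n, ∑ h ∈ EE n,
        if C3 e f g h then A e * A f * (A g * A h) else 0)
        ≤ (∑ e ∈ EE n, ∑ f ∈ EE n, ∑ g ∈ EE n, ∑ h ∈ EE n,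
          if C3 e f g h then w e * w f else 0) := by
      refine sum4_le _ _ ?_
      intro e he f hf g hg h hh
      split_ifs with hc
      · obtain ⟨hW', h1, h2, rfl⟩ := hc
        have hfg : f = g := pair_elim hf hg (w4_cancel (w4_1423 hW'))
        rw [← hfg, hwdef]
        exact le_of_eq (by ring)
      · exact le_refl 0
    refine le_trans step1 ?_
    have := NL (n := n) 1 (fun x y z t => C3 x y z t) w hw ?_
    · simpa using this
    · intro x hx y hy
      refine count_sub1 (u := y) (v := x) _ ?_
      intro z t hz ht hc
      obtain ⟨hW', h1, h2, hxt⟩ := hc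
      subst hxt
      have hyz : y = z := pair_elim hy hz (w4_cancel (w4_1423 hW'))
      exact Prod.ext hyz.symm rfl
  -- BOUND 4
  have hB4 : (∑ e ∈ EE n, ∑ f ∈ EE n, ∑ g ∈ EE n, ∑ h ∈ EE n,
      if C4 e f g h then A e * A f * (A g * A h) else 0) ≤ 4 * (σ * σ) := by
    have hGa : (∑ e ∈ EE n, ∑ f ∈ EE n, ∑ g ∈ EE n, ∑ h ∈ EE n,
        if C4 e f g h then w e * w f else 0) ≤ 4 * (σ * σ) := by
      have := NL (n := n) 4 (fun x y z t => C4 x y z t) w hw ?_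
      · simpa using this
      · intro x hx y hy
        refine count_sub hx hy _ ?_
        intro z t hz ht hc
        obtain ⟨hW', h1, h2, h3, hd⟩ := hc
        obtain ⟨hyz, hyt, hzt⟩ := dist_upgrade hx hy hz ht hW' h1 h2 h3
        exact ⟨hW', Ne.symm h2, Ne.symm hyz, hd⟩
    have hGb : (∑ e ∈ EE n, ∑ f ∈ EE n, ∑ g ∈ EE n, ∑ h ∈ EE n,
        if C4 e f g h then w g * w h else 0) ≤ 4 * (σ * σ) := by
      rw [perm3412 (fun e f g h => if C4 e f g h then w g * w h else 0)]
      have := NL (n := n) 4 (fun x y z t => C4 z t x y) w hw ?_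
      · simpa using this
      · intro x hx y hy
        refine count_sub2 hx hy _ ?_
        intro z t hz ht hc
        obtain ⟨hW', h1, h2, h3, hd⟩ := hc
        obtain ⟨htx, hty, hxy⟩ := dist_upgrade hz ht hx hy hW' h1 h2 h3
        exact ⟨hW', hd, Ne.symm h2, Ne.symm htx, Ne.symm h3, Ne.symm hty⟩
    have h2S : 2 * (∑ e ∈ EE n, ∑ f ∈ EE n, ∑ g ∈ EE n, ∑ h ∈ EE n,
        if C4 e f g h then A e * A f * (A g * A h) else 0)
        ≤ (∑ e ∈ EE n, ∑ f ∈ EE n, ∑ g ∈ EE n, ∑ h ∈ EE n,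
          if C4 e f g h then w e * w f else 0)
        + (∑ e ∈ EE n, ∑ f ∈ EE n, ∑ g ∈ EE n, ∑ h ∈ EE n,
          if C4 e f g h then w g * w h else 0) := by
      have expand : 2 * (∑ e ∈ EE n, ∑ f ∈ EE n, ∑ g ∈ EE n, ∑ h ∈ EE n,
          if C4 e f g h then A e * A f * (A g * A h) else 0)
          = (∑ e ∈ EE n, ∑ f ∈ EE n, ∑ g ∈ EE n, ∑ h ∈ EE n,
            2 * (if C4 e f g h then A e * A f * (A g * A h) else 0)) := by
        simp [Finset.mul_sum]
      rw [expand]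
      have hle := sum4_le (fun e f g h => 2 * (if C4 e f g h then A e * A f * (A g * A h) else 0))
        (fun e f g h => (if C4 e f g h then w e * w f else 0) + (if C4 e f g h then w g * w h else 0)) ?_
      · refine le_trans hle (le_of_eq ?_)
        simp only [Finset.sum_add_distrib]
      · intro e he f hf g hg h hh
        split_ifs with hc
        · simp only [hwdef]
          nlinarith [sq_nonneg (A e * A f - A g * A h)]
        · simp
    linarith
  -- BOUND 5
  have hB5 : (∑ e ∈ EE n, ∑ f ∈ EE n, ∑ g ∈ EE n, ∑ h ∈ EE n,
      if C5 e f g h then A e * A f * (A g * A h) else 0) ≤ 4 * (σ * σ) := by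
    have hGa : (∑ e ∈ EE n, ∑ f ∈ EE n, ∑ g ∈ EE n, ∑ h ∈ EE n,
        if C5 e f g h then w e * w g else 0) ≤ 4 * (σ * σ) := by
      rw [perm1324 (fun e f g h => if C5 e f g h then w e * w g else 0)]
      have := NL (n := n) 4 (fun x y z t => C5 x z y t) w hw ?_
      · simpa using this
      · intro x hx y hy
        refine count_sub hx hy _ ?_
        intro z t hz ht hc
        obtain ⟨hW', hxz, hxy, hxt, hnd, hdxy⟩ := hc
        obtain ⟨hzy, hzt, hyt⟩ := dist_upgrade hx hz hy ht hW' hxz hxy hxt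
        exact ⟨w4_1324 hW', Ne.symm hxz, hzy, hdxy⟩
    have hGb : (∑ e ∈ EE n, ∑ f ∈ EE n, ∑ g ∈ EE n, ∑ h ∈ EE n,
        if C5 e f g h then w f * w h else 0) ≤ 4 * (σ * σ) := by
      rw [perm2413 (fun e f g h => if C5 e f g h then w f * w h else 0)]
      have := NL (n := n) 4 (fun x y z t => C5 z x t y) w hw ?_
      · simpa using this
      · intro x hx y hy
        refine count_sub2 hx hy _ ?_
        intro z t hz ht hc
        obtain ⟨hW', hzx, hzt, hzy, hnd, hdzt⟩ := hc
        obtain ⟨hxt, hxy, hty⟩ := dist_upgrade hz hx ht hy hW' hzx hzt hzy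
        exact ⟨w4_1324 hW', hdzt, Ne.symm hzx, hxt, Ne.symm hzy, Ne.symm hty⟩
    have h2S : 2 * (∑ e ∈ EE n, ∑ f ∈ EE n, ∑ g ∈ EE n, ∑ h ∈ EE n,
        if C5 e f g h then A e * A f * (A g * A h) else 0)
        ≤ (∑ e ∈ EE n, ∑ f ∈ EE n, ∑ g ∈ EE n, ∑ h ∈ EE n,
          if C5 e f g h then w e * w g else 0)
        + (∑ e ∈ EE n, ∑ f ∈ EE n, ∑ g ∈ EE n, ∑ h ∈ EE n,
          if C5 e f g h then w f * w h else 0) := by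
      have expand : 2 * (∑ e ∈ EE n, ∑ f ∈ EE n, ∑ g ∈ EE n, ∑ h ∈ EE n,
          if C5 e f g h then A e * A f * (A g * A h) else 0)
          = (∑ e ∈ EE n, ∑ f ∈ EE n, ∑ g ∈ EE n, ∑ h ∈ EE n,
            2 * (if C5 e f g h then A e * A f * (A g * A h) else 0)) := by
        simp [Finset.mul_sum]
      rw [expand]
      have hle := sum4_le (fun e f g h => 2 * (if C5 e f g h then A e * A f * (A g * A h) else 0))
        (fun e f g h => (if C5 e f g h then w e * w g else 0) + (if C5 e f g h then w f * w h else 0)) ?_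
      · refine le_trans hle (le_of_eq ?_)
        simp only [Finset.sum_add_distrib]
      · intro e he f hf g hg h hh
        split_ifs with hc
        · simp only [hwdef]
          nlinarith [sq_nonneg (A e * A g - A f * A h)]
        · simp
    linarith
  -- BOUND 6
  have hB6 : (∑ e ∈ EE n, ∑ f ∈ EE n, ∑ g ∈ EE n, ∑ h ∈ EE n,
      if C6 e f g h then A e * A f * (A g * A h) else 0) ≤ 4 * (σ * σ) := by
    have hGa : (∑ e ∈ EE n, ∑ f ∈ EE n, ∑ g ∈ EE n, ∑ h ∈ EE n,
        if C6 e f g h then w e * w h else 0) ≤ 4 * (σ * σ) := by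
      rw [perm1423 (fun e f g h => if C6 e f g h then w e * w h else 0)]
      have := NL (n := n) 4 (fun x y z t => C6 x z t y) w hw ?_
      · simpa using this
      · intro x hx y hy
        refine count_sub hx hy _ ?_
        intro z t hz ht hc
        obtain ⟨hW', hxz, hxt, hxy, hnd1, hnd2, hdxy⟩ := hc
        obtain ⟨hzt, hzy, hty⟩ := dist_upgrade hx hz ht hy hW' hxz hxt hxy
        exact ⟨w4_1423 hW', Ne.symm hxz, hzy, hdxy⟩
    have hGb : (∑ e ∈ EE n, ∑ f ∈ EE n, ∑ g ∈ EE n, ∑ h ∈ EE n,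
        if C6 e f g h then w f * w g else 0) ≤ 4 * (σ * σ) := by
      rw [perm2314 (fun e f g h => if C6 e f g h then w f * w g else 0)]
      have := NL (n := n) 4 (fun x y z t => C6 z x y t) w hw ?_
      · simpa using this
      · intro x hx y hy
        refine count_sub2 hx hy _ ?_
        intro z t hz ht hc
        obtain ⟨hW', hzx, hzy, hzt, hnd1, hnd2, hdzt⟩ := hc
        obtain ⟨hxy, hxt, hyt⟩ := dist_upgrade hz hx hy ht hW' hzx hzy hzt
        exact ⟨w4_1423 hW', hdzt, Ne.symm hzx, hxt, Ne.symm hzy, hyt⟩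
    have h2S : 2 * (∑ e ∈ EE n, ∑ f ∈ EE n, ∑ g ∈ EE n, ∑ h ∈ EE n,
        if C6 e f g h then A e * A f * (A g * A h) else 0)
        ≤ (∑ e ∈ EE n, ∑ f ∈ EE n, ∑ g ∈ EE n, ∑ h ∈ EE n,
          if C6 e f g h then w e * w h else 0)
        + (∑ e ∈ EE n, ∑ f ∈ EE n, ∑ g ∈ EE n, ∑ h ∈ EE n,
          if C6 e f g h then w f * w g else 0) := by
      have expand : 2 * (∑ e ∈ EE n, ∑ f ∈ EE n, ∑ g ∈ EE n, ∑ h ∈ EE n,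
          if C6 e f g h then A e * A f * (A g * A h) else 0)
          = (∑ e ∈ EE n, ∑ f ∈ EE n, ∑ g ∈ EE n, ∑ h ∈ EE n,
            2 * (if C6 e f g h then A e * A f * (A g * A h) else 0)) := by
        simp [Finset.mul_sum]
      rw [expand]
      have hle := sum4_le (fun e f g h => 2 * (if C6 e f g h then A e * A f * (A g * A h) else 0))
        (fun e f g h => (if C6 e f g h then w e * w h else 0) + (if C6 e f g h then w f * w g else 0)) ?_
      · refine le_trans hle (le_of_eq ?_)
        simp only [Finset.sum_add_distrib]
      · intro e he f hf g hg h hh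
        split_ifs with hc
        · simp only [hwdef]
          nlinarith [sq_nonneg (A e * A h - A f * A g)]
        · simp
    linarith
  -- SPLIT and conclude
  have hsplit : (∑ e ∈ EE n, ∑ f ∈ EE n, ∑ g ∈ EE n, ∑ h ∈ EE n,
      if W4 e f g h then A e * A f * (A g * A h) else 0)
      = (∑ e ∈ EE n, ∑ f ∈ EE n, ∑ g ∈ EE n, ∑ h ∈ EE n,
          if C1 e f g h then A e * A f * (A g * A h) else 0)
      + (∑ e ∈ EE n, ∑ f ∈ EE n, ∑ g ∈ EE n, ∑ h ∈ EE n,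
          if C2 e f g h then A e * A f * (A g * A h) else 0)
      + (∑ e ∈ EE n, ∑ f ∈ EE n, ∑ g ∈ EE n, ∑ h ∈ EE n,
          if C3 e f g h then A e * A f * (A g * A h) else 0)
      + (∑ e ∈ EE n, ∑ f ∈ EE n, ∑ g ∈ EE n, ∑ h ∈ EE n,
          if C4 e f g h then A e * A f * (A g * A h) else 0)
      + (∑ e ∈ EE n, ∑ f ∈ EE n, ∑ g ∈ EE n, ∑ h ∈ EE n,
          if C5 e f g h then A e * A f * (A g * A h) else 0)
      + (∑ e ∈ EE n, ∑ f ∈ EE n, ∑ g ∈ EE n, ∑ h ∈ EE n,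
          if C6 e f g h then A e * A f * (A g * A h) else 0) := by
    calc (∑ e ∈ EE n, ∑ f ∈ EE n, ∑ g ∈ EE n, ∑ h ∈ EE n,
        if W4 e f g h then A e * A f * (A g * A h) else 0)
        = (∑ e ∈ EE n, ∑ f ∈ EE n, ∑ g ∈ EE n, ∑ h ∈ EE n,
          ((if C1 e f g h then A e * A f * (A g * A h) else 0)
          + (if C2 e f g h then A e * A f * (A g * A h) else 0)
          + (if C3 e f g h then A e * A f * (A g * A h) else 0)
          + (if C4 e f g h then A e * A f * (A g * A h) else 0)
          + (if C5 e f g h then A e * A f * (A g * A h) else 0)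
          + (if C6 e f g h then A e * A f * (A g * A h) else 0))) := by
          refine Finset.sum_congr rfl fun e he => Finset.sum_congr rfl fun f hf =>
            Finset.sum_congr rfl fun g hg => Finset.sum_congr rfl fun h hh =>
            cover he hf hg hh _
      _ = _ := by simp only [Finset.sum_add_distrib]
  rw [hsplit]
  linarith
theorem comb2 {n : ℕ} (A : Fin n × Fin n → ℝ) :
    (∑ e ∈ EE n, ∑ f ∈ EE n, if (∀ v, Even (dd e v + dd f v)) then A e * A f else 0)
      = ∑ e ∈ EE n, A e ^ 2 := by
  refine Finset.sum_congr rfl fun e he => ?_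
  have hpt : ∀ f ∈ EE n, (if (∀ v, Even (dd e v + dd f v)) then A e * A f else 0)
      = (if f = e then A e * A f else 0) := by
    intro f hf
    refine if_congr ?_ rfl rfl
    constructor
    · intro hev
      exact (pair_elim he hf hev).symm
    · rintro rfl
      exact w2_refl _
  rw [Finset.sum_congr rfl hpt, Finset.sum_ite_eq' (EE n) e (fun f => A e * A f), if_pos he, sq]
variable {Ω : Type*} [MeasureSpace Ω] [IsProbabilityMeasure (ℙ : Measure Ω)]
  {n : ℕ} {r : Fin n → Ω → ℝ}

lemma integral_r (hmeas : ∀ i, Measurable (r i)) (hval : ∀ i ω, r i ω = 1 ∨ r i ω = -1)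
    (hrad : ∀ i, ℙ {ω | r i ω = 1} = 1 / 2) (i : Fin n) : ∫ ω, r i ω ∂ℙ = 0 := by
  have hA : MeasurableSet {ω | r i ω = 1} := hmeas i (measurableSet_singleton 1)
  have hpt : (fun ω => r i ω) = fun ω => Set.indicator {ω' | r i ω' = 1} (fun _ => (2:ℝ)) ω - 1 := by
    funext ω
    by_cases hω : r i ω = 1
    · rw [Set.indicator_of_mem (show ω ∈ {ω' | r i ω' = 1} from hω)]; rw [hω]; norm_num
    · have hm : r i ω = -1 := (hval i ω).resolve_left hω
      rw [Set.indicator_of_notMem (show ω ∉ {ω' | r i ω' = 1} from hω), hm]; norm_num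
  rw [hpt, integral_sub ((integrable_const (2:ℝ)).indicator hA) (integrable_const 1),
    integral_indicator_const _ hA]
  rw [measureReal_def, hrad i]
  simp [ENNReal.toReal_div]

lemma integral_r_pow (hmeas : ∀ i, Measurable (r i)) (hval : ∀ i ω, r i ω = 1 ∨ r i ω = -1)
    (hrad : ∀ i, ℙ {ω | r i ω = 1} = 1 / 2) (i : Fin n) (m : ℕ) :
    ∫ ω, r i ω ^ m ∂ℙ = if Even m then 1 else 0 := by
  have hpt : (fun ω => r i ω ^ m) = fun ω => if Even m then 1 else r i ω := by
    funext ω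
    rcases hval i ω with hv | hv <;> rw [hv] <;> split_ifs with hm
    · exact one_pow m
    · exact one_pow m
    · exact Even.neg_one_pow hm
    · exact Odd.neg_one_pow (Nat.odd_iff.mpr (Nat.not_even_iff.mp hm))
  rw [hpt]
  split_ifs with hm
  · simp
  · exact integral_r hmeas hval hrad i

lemma integrable_prod_pow (hmeas : ∀ i, Measurable (r i))
    (hval : ∀ i ω, r i ω = 1 ∨ r i ω = -1) (m : Fin n → ℕ) (s : Finset (Fin n)) :
    Integrable (fun ω => ∏ i ∈ s, r i ω ^ m i) ℙ := by
  refine (integrable_const (1:ℝ)).mono' ?_ ?_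
  · exact (Finset.measurable_prod s (fun i _ => (hmeas i).pow_const (m i))).aestronglyMeasurable
  · refine Filter.Eventually.of_forall fun ω => ?_
    rw [Real.norm_eq_abs, Finset.abs_prod]
    refine le_of_eq ?_
    calc ∏ i ∈ s, |r i ω ^ m i| = ∏ i ∈ s, 1 :=
        Finset.prod_congr rfl fun i _ => by
          rw [abs_pow]; rcases hval i ω with hv | hv <;> rw [hv] <;> simp
      _ = 1 := Finset.prod_const_one

lemma integral_prod_pow (hmeas : ∀ i, Measurable (r i))
    (hindep : iIndepFun r ℙ) (m : Fin n → ℕ) (s : Finset (Fin n)) :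
    ∫ ω, ∏ i ∈ s, r i ω ^ m i ∂ℙ = ∏ i ∈ s, ∫ ω, r i ω ^ m i ∂ℙ := by
  classical
  induction s using Finset.induction_on with
  | empty => simp
  | @insert a s ha ih =>
    have hf : iIndepFun (fun i => fun ω => r i ω ^ m i) ℙ := by
      have := hindep.comp (fun i (x : ℝ) => x ^ m i) (fun i => measurable_id.pow_const (m i))
      exact this
    have hmeas' : ∀ i, Measurable (fun ω => r i ω ^ m i) := fun i => (hmeas i).pow_const (m i)
    have hIF : IndepFun (fun ω => r a ω ^ m a) (fun ω => ∏ i ∈ s, r i ω ^ m i) ℙ := by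
      have h0 := (hf.indepFun_finsetProd_of_notMem hmeas' ha).symm
      have hfun : (∏ j ∈ s, (fun i => fun ω => r i ω ^ m i) j) = fun ω => ∏ i ∈ s, r i ω ^ m i := by
        funext ω; exact Finset.prod_apply ω s _
      rwa [hfun] at h0
    simp_rw [Finset.prod_insert ha]
    rw [IndepFun.integral_fun_mul_eq_mul_integral hIF (hmeas' a).aestronglyMeasurable
      (Finset.measurable_prod s (fun i _ => hmeas' i)).aestronglyMeasurable, ih]

def QQ (r : Fin n → Ω → ℝ) (m : Fin n → ℕ) : Ω → ℝ := fun ω => ∏ i, r i ω ^ m i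

lemma QQ_int (hmeas : ∀ i, Measurable (r i)) (hindep : iIndepFun r ℙ)
    (hval : ∀ i ω, r i ω = 1 ∨ r i ω = -1) (hrad : ∀ i, ℙ {ω | r i ω = 1} = 1 / 2)
    (m : Fin n → ℕ) : ∫ ω, QQ r m ω ∂ℙ = if (∀ i, Even (m i)) then 1 else 0 := by
  unfold QQ
  rw [integral_prod_pow hmeas hindep m Finset.univ]
  by_cases hall : ∀ i, Even (m i)
  · rw [if_pos hall]
    refine Finset.prod_eq_one fun i _ => ?_
    rw [integral_r_pow hmeas hval hrad, if_pos (hall i)]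
  · rw [if_neg hall]
    obtain ⟨i0, hi0⟩ := not_forall.mp hall
    refine Finset.prod_eq_zero (Finset.mem_univ i0) ?_
    rw [integral_r_pow hmeas hval hrad, if_neg hi0]

lemma QQ_mul (m m' : Fin n → ℕ) (ω : Ω) :
    QQ r m ω * QQ r m' ω = QQ r (fun v => m v + m' v) ω := by
  unfold QQ
  rw [← Finset.prod_mul_distrib]
  exact Finset.prod_congr rfl fun i _ => (pow_add _ _ _).symm

lemma QQ_integrable (hmeas : ∀ i, Measurable (r i)) (hval : ∀ i ω, r i ω = 1 ∨ r i ω = -1)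
    (m : Fin n → ℕ) : Integrable (QQ r m) ℙ := integrable_prod_pow hmeas hval m Finset.univ

lemma QQ_meas (hmeas : ∀ i, Measurable (r i)) (m : Fin n → ℕ) : Measurable (QQ r m) :=
  Finset.measurable_prod _ fun i _ => (hmeas i).pow_const _

lemma QQ_abs (hval : ∀ i ω, r i ω = 1 ∨ r i ω = -1) (m : Fin n → ℕ) (ω : Ω) :
    |QQ r m ω| = 1 := by
  unfold QQ
  rw [Finset.abs_prod]
  calc ∏ i, |r i ω ^ m i| = ∏ i : Fin n, 1 :=
      Finset.prod_congr rfl fun i _ => by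
        rw [abs_pow]; rcases hval i ω with hv | hv <;> rw [hv] <;> simp
    _ = 1 := Finset.prod_const_one

lemma QQ_edge (hmeas : ∀ i, Measurable (r i)) {p : Fin n × Fin n} (hp : p.1 ≠ p.2) (ω : Ω) :
    QQ r (dd p) ω = r p.1 ω * r p.2 ω := by
  have hone : ∀ j : Fin n, (∏ i, r i ω ^ (if j = i then 1 else 0)) = r j ω := by
    intro j
    calc ∏ i, r i ω ^ (if j = i then 1 else 0) = ∏ i, (if j = i then r i ω else 1) :=
        Finset.prod_congr rfl fun i _ => by split_ifs <;> simp
      _ = r j ω := by rw [Finset.prod_ite_eq]; simp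
  unfold QQ dd
  calc ∏ i, r i ω ^ ((if p.1 = i then 1 else 0) + (if p.2 = i then 1 else 0))
      = ∏ i, (r i ω ^ (if p.1 = i then 1 else 0)) * (r i ω ^ (if p.2 = i then 1 else 0)) :=
        Finset.prod_congr rfl fun i _ => pow_add _ _ _
    _ = (∏ i, r i ω ^ (if p.1 = i then 1 else 0)) * (∏ i, r i ω ^ (if p.2 = i then 1 else 0)) :=
        Finset.prod_mul_distrib
    _ = r p.1 ω * r p.2 ω := by rw [hone, hone]

lemma X_meas (hmeas : ∀ i, Measurable (r i)) (A : Fin n × Fin n → ℝ) :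
    Measurable (fun ω => ∑ p ∈ EE n, A p * QQ r (dd p) ω) :=
  Finset.measurable_sum _ fun p _ => (QQ_meas hmeas (dd p)).const_mul (A p)

lemma X_bdd (hval : ∀ i ω, r i ω = 1 ∨ r i ω = -1) (A : Fin n × Fin n → ℝ) (ω : Ω) :
    |∑ p ∈ EE n, A p * QQ r (dd p) ω| ≤ ∑ p ∈ EE n, |A p| := by
  refine le_trans (Finset.abs_sum_le_sum_abs _ _) ?_
  refine Finset.sum_le_sum fun p hp => ?_
  rw [abs_mul, QQ_abs hval, mul_one]

lemma Xpow_int (hmeas : ∀ i, Measurable (r i)) (hval : ∀ i ω, r i ω = 1 ∨ r i ω = -1)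
    (A : Fin n × Fin n → ℝ) (k : ℕ) :
    Integrable (fun ω => (∑ p ∈ EE n, A p * QQ r (dd p) ω) ^ k) ℙ := by
  refine (integrable_const ((∑ p ∈ EE n, |A p|) ^ k)).mono'
    ((X_meas hmeas A).pow_const k).aestronglyMeasurable (Filter.Eventually.of_forall fun ω => ?_)
  rw [Real.norm_eq_abs, abs_pow]
  exact pow_le_pow_left₀ (abs_nonneg _) (X_bdd hval A ω) k

lemma X_int (hmeas : ∀ i, Measurable (r i)) (hval : ∀ i ω, r i ω = 1 ∨ r i ω = -1)
    (A : Fin n × Fin n → ℝ) :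
    Integrable (fun ω => ∑ p ∈ EE n, A p * QQ r (dd p) ω) ℙ :=
  integrable_finset_sum _ fun p _ => (QQ_integrable hmeas hval (dd p)).const_mul (A p)

lemma sum_pow_four {β : Type*} (s : Finset β) (v : β → ℝ) :
    (∑ p ∈ s, v p) ^ 4 = ∑ p ∈ s, ∑ q ∈ s, ∑ u ∈ s, ∑ t ∈ s, v p * v q * (v u * v t) := by
  have e2 : (∑ p ∈ s, v p) * (∑ q ∈ s, v q) = ∑ p ∈ s, ∑ q ∈ s, v p * v q :=
    Finset.sum_mul_sum s s v v
  have h1 : (∑ p ∈ s, v p) ^ 4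
      = (∑ p ∈ s, ∑ q ∈ s, v p * v q) * (∑ u ∈ s, ∑ t ∈ s, v u * v t) := by
    rw [← e2]; ring
  rw [h1, Finset.sum_mul]
  refine Finset.sum_congr rfl fun p _ => ?_
  rw [Finset.sum_mul]
  refine Finset.sum_congr rfl fun q _ => ?_
  rw [Finset.mul_sum]
  refine Finset.sum_congr rfl fun u _ => ?_
  rw [Finset.mul_sum]
lemma EX1 (hmeas : ∀ i, Measurable (r i)) (hindep : iIndepFun r ℙ)
    (hval : ∀ i ω, r i ω = 1 ∨ r i ω = -1) (hrad : ∀ i, ℙ {ω | r i ω = 1} = 1 / 2)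
    (A : Fin n × Fin n → ℝ) :
    ∫ ω, (∑ p ∈ EE n, A p * QQ r (dd p) ω) ∂ℙ = 0 := by
  rw [integral_finset_sum _ (fun p _ => (QQ_integrable hmeas hval (dd p)).const_mul (A p))]
  refine Finset.sum_eq_zero fun p hp => ?_
  rw [integral_const_mul, QQ_int hmeas hindep hval hrad, if_neg (odd_single hp), mul_zero]

lemma EX2 (hmeas : ∀ i, Measurable (r i)) (hindep : iIndepFun r ℙ)
    (hval : ∀ i ω, r i ω = 1 ∨ r i ω = -1) (hrad : ∀ i, ℙ {ω | r i ω = 1} = 1 / 2)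
    (A : Fin n × Fin n → ℝ) :
    ∫ ω, (∑ p ∈ EE n, A p * QQ r (dd p) ω) ^ 2 ∂ℙ = ∑ p ∈ EE n, A p ^ 2 := by
  have hpt : (fun ω => (∑ p ∈ EE n, A p * QQ r (dd p) ω) ^ 2)
      = fun ω => ∑ p ∈ EE n, ∑ q ∈ EE n, (A p * A q) * QQ r (fun v => dd p v + dd q v) ω := by
    funext ω
    rw [sq, Finset.sum_mul_sum]
    refine Finset.sum_congr rfl fun p _ => Finset.sum_congr rfl fun q _ => ?_
    rw [mul_mul_mul_comm, QQ_mul]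
  rw [hpt, integral_finset_sum _ (fun p _ => integrable_finset_sum _
    (fun q _ => (QQ_integrable hmeas hval _).const_mul _))]
  have h1 : ∀ p ∈ EE n, (∫ ω, ∑ q ∈ EE n, (A p * A q) * QQ r (fun v => dd p v + dd q v) ω ∂ℙ)
      = ∑ q ∈ EE n, (if (∀ v, Even (dd p v + dd q v)) then A p * A q else 0) := by
    intro p hp
    rw [integral_finset_sum _ (fun q _ => (QQ_integrable hmeas hval _).const_mul _)]
    refine Finset.sum_congr rfl fun q hq => ?_
    rw [integral_const_mul, QQ_int hmeas hindep hval hrad]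
    split_ifs <;> simp
  rw [Finset.sum_congr rfl h1, comb2 A]

lemma EX4 (hmeas : ∀ i, Measurable (r i)) (hindep : iIndepFun r ℙ)
    (hval : ∀ i ω, r i ω = 1 ∨ r i ω = -1) (hrad : ∀ i, ℙ {ω | r i ω = 1} = 1 / 2)
    (A : Fin n × Fin n → ℝ) :
    ∫ ω, (∑ p ∈ EE n, A p * QQ r (dd p) ω) ^ 4 ∂ℙ
      ≤ 15 * ((∑ p ∈ EE n, A p ^ 2) * (∑ p ∈ EE n, A p ^ 2)) := by
  have hpt : (fun ω => (∑ p ∈ EE n, A p * QQ r (dd p) ω) ^ 4)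
      = fun ω => ∑ e ∈ EE n, ∑ f ∈ EE n, ∑ g ∈ EE n, ∑ h ∈ EE n,
          (A e * A f * (A g * A h))
            * QQ r (fun v => dd e v + dd f v + (dd g v + dd h v)) ω := by
    funext ω
    rw [sum_pow_four]
    refine Finset.sum_congr rfl fun e _ => Finset.sum_congr rfl fun f _ =>
      Finset.sum_congr rfl fun g _ => Finset.sum_congr rfl fun h _ => ?_
    rw [show (A e * QQ r (dd e) ω) * (A f * QQ r (dd f) ω)
        * ((A g * QQ r (dd g) ω) * (A h * QQ r (dd h) ω))
        = (A e * A f * (A g * A h)) * ((QQ r (dd e) ω * QQ r (dd f) ω)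
          * (QQ r (dd g) ω * QQ r (dd h) ω)) by ring]
    rw [QQ_mul, QQ_mul, QQ_mul]
  rw [hpt, integral_finset_sum _ (fun e _ => integrable_finset_sum _ (fun f _ =>
    integrable_finset_sum _ (fun g _ => integrable_finset_sum _
      (fun h _ => (QQ_integrable hmeas hval _).const_mul _))))]
  have h1 : ∀ e ∈ EE n, (∫ ω, ∑ f ∈ EE n, ∑ g ∈ EE n, ∑ h ∈ EE n,
      (A e * A f * (A g * A h)) * QQ r (fun v => dd e v + dd f v + (dd g v + dd h v)) ω ∂ℙ)
      = ∑ f ∈ EE n, ∑ g ∈ EE n, ∑ h ∈ EE n,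
        (if W4 e f g h then A e * A f * (A g * A h) else 0) := by
    intro e he
    rw [integral_finset_sum _ (fun f _ => integrable_finset_sum _ (fun g _ =>
      integrable_finset_sum _ (fun h _ => (QQ_integrable hmeas hval _).const_mul _)))]
    refine Finset.sum_congr rfl fun f _ => ?_
    rw [integral_finset_sum _ (fun g _ => integrable_finset_sum _
      (fun h _ => (QQ_integrable hmeas hval _).const_mul _))]
    refine Finset.sum_congr rfl fun g _ => ?_
    rw [integral_finset_sum _ (fun h _ => (QQ_integrable hmeas hval _).const_mul _)]
    refine Finset.sum_congr rfl fun h _ => ?_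
    rw [integral_const_mul, QQ_int hmeas hindep hval hrad]
    have hiff : (∀ v, Even (dd e v + dd f v + (dd g v + dd h v))) ↔ W4 e f g h := by
      constructor <;> intro H v <;> obtain ⟨c, hc⟩ := H v <;> exact ⟨c, by omega⟩
    simp only [hiff]
    split_ifs <;> simp
  rw [Finset.sum_congr rfl h1]
  exact comb_main A


lemma hEEsum {n : ℕ} (F : Fin n × Fin n → ℝ) :
    (∑ p ∈ EE n, F p) = ∑ i : Fin n, ∑ j : Fin n, if i < j then F (i, j) else 0 := by
  unfold EE
  rw [Finset.sum_filter, ← Finset.univ_product_univ, Finset.sum_product]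

end Stmt15Aux
end

open Stmt15Aux in
theorem stmt15 {Ω : Type*} [MeasureSpace Ω] [IsProbabilityMeasure (ℙ : Measure Ω)]
    {n : ℕ} (r : Fin n → Ω → ℝ) (hmeas : ∀ i, Measurable (r i))
    (hindep : iIndepFun r ℙ)
    (hval : ∀ i ω, r i ω = 1 ∨ r i ω = -1)
    (hrad : ∀ i, ℙ {ω | r i ω = 1} = 1 / 2)
    (a : Fin n → Fin n → ℝ) :
    ENNReal.ofReal ((2 * Real.sqrt 3 - 3) / 15) ≤
        ℙ {ω | 0 ≤ ∑ i, ∑ j, if i < j then r i ω * r j ω * a i j else 0} ∧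
    (3 / 100 : ℝ) < (2 * Real.sqrt 3 - 3) / 15 ∧
    ((∃ i j, i < j ∧ a i j ≠ 0) →
      ENNReal.ofReal ((2 * Real.sqrt 3 - 3) / 15) ≤
        ℙ {ω | 0 < ∑ i, ∑ j, if i < j then r i ω * r j ω * a i j else 0}) := by
  classical
  set A : Fin n × Fin n → ℝ := fun p => a p.1 p.2 with hA
  set X : Ω → ℝ := fun ω => ∑ p ∈ EE n, A p * QQ r (dd p) ω with hX
  have hcc : ((2 * Real.sqrt 3 - 3) / 15 : ℝ) = cc := rfl
  have hsum : ∀ ω, (∑ i, ∑ j, if i < j then r i ω * r j ω * a i j else 0) = X ω := by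
    intro ω
    have h1 := hEEsum (fun p => A p * QQ r (dd p) ω)
    rw [show X ω = ∑ p ∈ EE n, A p * QQ r (dd p) ω from rfl, h1]
    refine Finset.sum_congr rfl fun i _ => Finset.sum_congr rfl fun j _ => ?_
    split_ifs with hij
    · rw [QQ_edge hmeas (show ((i,j) : Fin n × Fin n).1 ≠ (i,j).2 from ne_of_lt hij)]
      simp only [hA]
      ring
    · rfl
  have hset1 : {ω | 0 ≤ ∑ i, ∑ j, if i < j then r i ω * r j ω * a i j else 0}
      = {ω | 0 ≤ X ω} := Set.ext fun ω => by
    simp only [Set.mem_setOf_eq, hsum ω]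
  have hset2 : {ω | 0 < ∑ i, ∑ j, if i < j then r i ω * r j ω * a i j else 0}
      = {ω | 0 < X ω} := Set.ext fun ω => by
    simp only [Set.mem_setOf_eq, hsum ω]
  set σ2 : ℝ := ∑ p ∈ EE n, A p ^ 2 with hσ2
  have hσ2nn : 0 ≤ σ2 := Finset.sum_nonneg fun p _ => sq_nonneg _
  -- main estimate
  have main : 0 < σ2 → ENNReal.ofReal ((2 * Real.sqrt 3 - 3) / 15) ≤ ℙ {ω | 0 < X ω} := by
    intro hσpos
    set s : ℝ := Real.sqrt σ2 with hs
    have hs2 : s ^ 2 = σ2 := Real.sq_sqrt hσpos.le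
    have hspos : 0 < s := Real.sqrt_pos.mpr hσpos
    have hXm : Measurable X := X_meas hmeas A
    have hmeasset : MeasurableSet {ω | 0 < X ω} := measurableSet_lt measurable_const hXm
    have hI1 : Integrable X ℙ := X_int hmeas hval A
    have hI2 : Integrable (fun ω => X ω ^ 2) ℙ := Xpow_int hmeas hval A 2
    have hI4 : Integrable (fun ω => X ω ^ 4) ℙ := Xpow_int hmeas hval A 4
    have hGle : ∀ ω, (al / s) * X ω + (be / σ2) * X ω ^ 2 - (ga / (σ2 * σ2)) * X ω ^ 4
        ≤ Set.indicator {ω' | 0 < X ω'} (fun _ => (1:ℝ)) ω := by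
      intro ω
      have hkp := key_poly (X ω / s)
      have hrw1 : al * (X ω / s) = (al / s) * X ω := by ring
      have hrw2 : be * (X ω / s) ^ 2 = (be / σ2) * X ω ^ 2 := by
        rw [div_pow, hs2]; ring
      have hrw3 : ga * (X ω / s) ^ 4 = (ga / (σ2 * σ2)) * X ω ^ 4 := by
        rw [div_pow, show s ^ 4 = σ2 * σ2 by rw [← hs2]; ring]; ring
      rw [hrw1, hrw2, hrw3] at hkp
      refine le_trans hkp ?_
      by_cases hpos : 0 < X ω
      · rw [if_pos (div_pos hpos hspos),
          Set.indicator_of_mem (show ω ∈ {ω' | 0 < X ω'} from hpos)]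
      · rw [if_neg (fun hc : 0 < X ω / s => hpos (by
            have := mul_pos hc hspos
            rwa [div_mul_cancel₀ _ (ne_of_gt hspos)] at this)),
          Set.indicator_of_notMem (show ω ∉ {ω' | 0 < X ω'} from hpos)]
    have hGint : Integrable (fun ω =>
        (al / s) * X ω + (be / σ2) * X ω ^ 2 - (ga / (σ2 * σ2)) * X ω ^ 4) ℙ := by
      exact ((hI1.const_mul _).add (hI2.const_mul _)).sub (hI4.const_mul _)
    have hind_int : Integrable (Set.indicator {ω' | 0 < X ω'} (fun _ => (1:ℝ))) ℙ :=
      (integrable_const 1).indicator hmeasset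
    have hmono := integral_mono hGint hind_int hGle
    rw [integral_indicator_const _ hmeasset] at hmono
    have hEX1' : ∫ ω, X ω ∂ℙ = 0 := EX1 hmeas hindep hval hrad A
    have hEX2' : ∫ ω, X ω ^ 2 ∂ℙ = σ2 := EX2 hmeas hindep hval hrad A
    have hEX4' : ∫ ω, X ω ^ 4 ∂ℙ ≤ 15 * (σ2 * σ2) := by
      have := EX4 hmeas hindep hval hrad A
      rw [hX]
      exact this
    have hGval : (∫ ω, ((al / s) * X ω + (be / σ2) * X ω ^ 2 - (ga / (σ2 * σ2)) * X ω ^ 4) ∂ℙ)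
        = (al / s) * (∫ ω, X ω ∂ℙ) + (be / σ2) * (∫ ω, X ω ^ 2 ∂ℙ)
          - (ga / (σ2 * σ2)) * (∫ ω, X ω ^ 4 ∂ℙ) := by
      have hadd : Integrable (fun ω => (al / s) * X ω + (be / σ2) * X ω ^ 2) ℙ := by
        have := (hI1.const_mul (al / s)).add (hI2.const_mul (be / σ2))
        exact this
      rw [integral_sub hadd (hI4.const_mul _),
        integral_add (hI1.const_mul (al / s)) (hI2.const_mul (be / σ2)),
        integral_const_mul, integral_const_mul, integral_const_mul]
    have hterm : (ga / (σ2 * σ2)) * (∫ ω, X ω ^ 4 ∂ℙ) ≤ 15 * ga := by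
      have h0 : (0:ℝ) < σ2 * σ2 := mul_pos hσpos hσpos
      calc (ga / (σ2 * σ2)) * (∫ ω, X ω ^ 4 ∂ℙ)
          ≤ (ga / (σ2 * σ2)) * (15 * (σ2 * σ2)) :=
            mul_le_mul_of_nonneg_left hEX4' (le_of_lt (div_pos ga_pos h0))
        _ = 15 * ga := by field_simp
    have hbe : (be / σ2) * σ2 = be := by field_simp
    have hccval : cc = be - 15 * ga := by unfold be ga; ring
    have hkey : cc ≤ (ℙ {ω | 0 < X ω}).toReal := by
      rw [hGval, hEX1', hEX2'] at hmono
      rw [smul_eq_mul, mul_one, measureReal_def] at hmono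
      rw [hccval]
      rw [hbe] at hmono
      linarith
    calc ENNReal.ofReal ((2 * Real.sqrt 3 - 3) / 15)
        ≤ ENNReal.ofReal ((ℙ {ω | 0 < X ω}).toReal) := by
          rw [hcc]; exact ENNReal.ofReal_le_ofReal hkey
      _ = ℙ {ω | 0 < X ω} := ENNReal.ofReal_toReal (measure_ne_top _ _)
  refine ⟨?_, numeric_part, ?_⟩
  · rw [hset1]
    by_cases hσpos : 0 < σ2
    · refine le_trans (main hσpos) (measure_mono ?_)
      intro ω hω
      simp only [Set.mem_setOf_eq] at hω ⊢
      exact le_of_lt hω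
    · have hz : σ2 = 0 := le_antisymm (not_lt.mp hσpos) hσ2nn
      have hA0 : ∀ p ∈ EE n, A p ^ 2 = 0 := by
        intro p hp
        exact (Finset.sum_eq_zero_iff_of_nonneg (fun q _ => sq_nonneg (A q))).mp hz p hp
      have hX0 : ∀ ω, X ω = 0 := by
        intro ω
        rw [show X ω = ∑ p ∈ EE n, A p * QQ r (dd p) ω from rfl]
        refine Finset.sum_eq_zero fun p hp => ?_
        rw [pow_eq_zero_iff two_ne_zero |>.mp (hA0 p hp), zero_mul]
      have huniv : {ω | 0 ≤ X ω} = Set.univ := Set.eq_univ_of_forall fun ω => by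
        simp only [Set.mem_setOf_eq, hX0 ω]
        exact le_refl 0
      rw [huniv, measure_univ, hcc]
      exact ENNReal.ofReal_le_one.mpr cc_le_one
  · rintro ⟨i, j, hij, hne⟩
    have hmem : ((i, j) : Fin n × Fin n) ∈ EE n := mem_EE.mpr hij
    have hpos0 : 0 < A (i, j) ^ 2 := by
      have : A (i, j) ≠ 0 := hne
      positivity
    have hσpos : 0 < σ2 :=
      lt_of_lt_of_le hpos0 (Finset.single_le_sum (fun p _ => sq_nonneg (A p)) hmem)
    rw [hset2]
    exact main hσpos
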